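/- arXiv:1207.6228 — 3 statements merged into one kernel-verified Lean document; each statement's English description precedes it below -/
import Mathlib

section
/- Let α be a finite measure on a measurable space 𝕏 with total mass a > 0, and let {Y_j, j ≥ 1} be the Pólya sequence with parameter α. For any measurable partition B_1,...,B_k of 𝕏 and nonnegative integers j_1,...,j_k with j_1 + ⋯ + j_k = n, the probability that exactly j_ℓ of Y_1,...,Y_n fall in B_ℓ for each ℓ equals the multinomial coefficient n!/(j_1!⋯j_k!) times ∏_{ℓ=1}^k (α(B_ℓ))_{j_ℓ↑} divided by (a)_{n↑}, where (x)_{m↑} := x(x+1)⋯(x+m-1) is the rising factorial. -/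
open MeasureTheory ProbabilityTheory Filter
open scoped Classical

lemma aux_poch (F : Finset ℕ) (x : ℝ) :
    ∏ i ∈ F, (x + ((F.filter (· < i)).card : ℝ)) = (ascPochhammer ℝ F.card).eval x := by
  induction F using Finset.induction_on_max with
  | empty => simp
  | insert a s hs ih =>
    have ha : a ∉ s := fun h => lt_irrefl a (hs a h)
    have h1 : (insert a s).filter (· < a) = s := by
      rw [Finset.filter_insert, if_neg (lt_irrefl a), Finset.filter_true_of_mem hs]
    have h2 : ∀ i ∈ s, (insert a s).filter (· < i) = s.filter (· < i) := by
      intro i hi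
      rw [Finset.filter_insert, if_neg (fun h => absurd (hs i hi) (not_lt.mpr h.le))]
    rw [Finset.prod_insert ha, h1, Finset.card_insert_of_notMem ha,
      ascPochhammer_succ_eval, ← ih, Finset.prod_congr rfl (fun i hi => by rw [h2 i hi]),
      mul_comm]

lemma aux_regroup {k : ℕ} (c : ℕ → Fin k) (g : Fin k → ℝ) (n : ℕ) :
    ∏ i ∈ Finset.range n,
        (g (c i) + (((Finset.range i).filter fun i' => c i' = c i).card : ℝ))
      = ∏ ℓ : Fin k,
          (ascPochhammer ℝ (((Finset.range n).filter fun i => c i = ℓ).card)).eval (g ℓ) := by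
  rw [← Finset.prod_fiberwise_of_maps_to (g := c) (t := Finset.univ)
    (fun i _ => Finset.mem_univ _)]
  refine Finset.prod_congr rfl fun ℓ _ => ?_
  rw [← aux_poch]
  refine Finset.prod_congr rfl fun i hi => ?_
  simp only [Finset.mem_filter, Finset.mem_range] at hi
  obtain ⟨hin, hci⟩ := hi
  have hset : (Finset.range i).filter (fun i' => c i' = c i)
      = (((Finset.range n).filter fun i' => c i' = ℓ).filter (· < i)) := by
    ext i'
    simp only [Finset.mem_filter, Finset.mem_range]
    constructor
    · rintro ⟨h1, h2⟩; exact ⟨⟨h1.trans hin, by rw [h2, hci]⟩, h1⟩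
    · rintro ⟨⟨h1, h2⟩, h3⟩; exact ⟨h3, by rw [h2, hci]⟩
  rw [hset, hci]

lemma aux_monomial {k : ℕ} (m : Fin k → ℕ) :
    (∏ ℓ, (MvPolynomial.X ℓ : MvPolynomial (Fin k) ℚ) ^ m ℓ)
      = MvPolynomial.monomial (Finsupp.equivFunOnFinite.symm m) 1 := by
  have hcoe : ⇑(Finsupp.equivFunOnFinite.symm m) = m := rfl
  rw [← MvPolynomial.prod_X_pow_eq_monomial]
  simp only [hcoe]
  refine (Finset.prod_subset (Finset.subset_univ _) fun ℓ _ hℓ => ?_).symm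
  have : m ℓ = 0 := by
    have := Finsupp.mem_support_iff.not.mp hℓ
    simpa [hcoe] using this
  rw [this, pow_zero]

lemma aux_card {k n : ℕ} (j : Fin k → ℕ) (hj : ∑ ℓ, j ℓ = n) :
    ((Finset.univ : Finset (Fin n → Fin k)).filter
        fun c => ∀ ℓ, (Finset.univ.filter fun i => c i = ℓ).card = j ℓ).card
      = Nat.multinomial Finset.univ j := by
  classical
  set cnt : (Fin n → Fin k) → (Fin k → ℕ) :=
    fun c ℓ => (Finset.univ.filter fun i => c i = ℓ).card with hcntdef
  have hcnt : ∀ c, ∑ ℓ, cnt c ℓ = n := by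
    intro c
    rw [hcntdef]
    rw [← Finset.card_eq_sum_card_fiberwise (f := c) (t := Finset.univ)
      (fun _ _ => Finset.mem_univ _)]
    simp
  have hmem : ∀ c : Fin n → Fin k, cnt c ∈ Finset.piAntidiag (Finset.univ : Finset (Fin k)) n := by
    intro c
    rw [Finset.mem_piAntidiag]
    exact ⟨hcnt c, fun _ _ => Finset.mem_univ _⟩
  have hjmem : j ∈ Finset.piAntidiag (Finset.univ : Finset (Fin k)) n := by
    rw [Finset.mem_piAntidiag]; exact ⟨hj, fun _ _ => Finset.mem_univ _⟩
  have hinj : Function.Injective (Finsupp.equivFunOnFinite.symm : (Fin k → ℕ) → (Fin k →₀ ℕ)) :=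
    Finsupp.equivFunOnFinite.symm.injective
  have h1 : (∑ ℓ : Fin k, (MvPolynomial.X ℓ : MvPolynomial (Fin k) ℚ)) ^ n
      = ∑ m ∈ Finset.piAntidiag (Finset.univ : Finset (Fin k)) n,
          ((Finset.univ.filter fun c : Fin n → Fin k => cnt c = m).card)
            • MvPolynomial.monomial (Finsupp.equivFunOnFinite.symm m) (1 : ℚ) := by
    rw [Fintype.sum_pow]
    rw [← Finset.sum_fiberwise_of_maps_to (g := cnt)
      (t := Finset.piAntidiag (Finset.univ : Finset (Fin k)) n) (fun c _ => hmem c)]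
    refine Finset.sum_congr rfl fun m _ => ?_
    rw [← Finset.sum_const]
    refine Finset.sum_congr rfl fun c hc => ?_
    simp only [Finset.mem_filter] at hc
    rw [← aux_monomial m, ← hc.2]
    rw [← Finset.prod_fiberwise_of_maps_to (g := c) (t := Finset.univ)
      (fun i _ => Finset.mem_univ _)]
    refine Finset.prod_congr rfl fun ℓ _ => ?_
    rw [Finset.prod_congr rfl (fun i hi => by
      rw [(Finset.mem_filter.mp hi).2] : ∀ i ∈ _, MvPolynomial.X (c i) = MvPolynomial.X ℓ)]
    rw [Finset.prod_const]
  have h2 : (∑ ℓ : Fin k, (MvPolynomial.X ℓ : MvPolynomial (Fin k) ℚ)) ^ n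
      = ∑ m ∈ Finset.piAntidiag (Finset.univ : Finset (Fin k)) n,
          (Nat.multinomial Finset.univ m)
            • MvPolynomial.monomial (Finsupp.equivFunOnFinite.symm m) (1 : ℚ) := by
    rw [Finset.sum_pow_eq_sum_piAntidiag (Finset.univ : Finset (Fin k))
      (fun ℓ => (MvPolynomial.X ℓ : MvPolynomial (Fin k) ℚ)) n]
    refine Finset.sum_congr rfl fun m _ => ?_
    rw [aux_monomial m, nsmul_eq_mul]
  have hpick : ∀ (A : (Fin k → ℕ) → ℕ),
      MvPolynomial.coeff (Finsupp.equivFunOnFinite.symm j)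
        (∑ m ∈ Finset.piAntidiag (Finset.univ : Finset (Fin k)) n,
          A m • MvPolynomial.monomial (Finsupp.equivFunOnFinite.symm m) (1 : ℚ))
      = (A j : ℚ) := by
    intro A
    rw [MvPolynomial.coeff_sum]
    rw [Finset.sum_eq_single j]
    · rw [MvPolynomial.coeff_smul, MvPolynomial.coeff_monomial, if_pos rfl]
      simp
    · intro m _ hmj
      rw [MvPolynomial.coeff_smul, MvPolynomial.coeff_monomial,
        if_neg (fun h => hmj (hinj h))]
      simp
    · intro h; exact absurd hjmem h
  have h3 := congrArg (MvPolynomial.coeff (Finsupp.equivFunOnFinite.symm j)) (h1.symm.trans h2)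
  rw [hpick, hpick] at h3
  have hcards : (Finset.univ.filter fun c : Fin n → Fin k => cnt c = j).card
      = Nat.multinomial Finset.univ j := Nat.cast_injective h3
  rw [← hcards]
  refine congrArg Finset.card (Finset.filter_congr fun c _ => ?_)
  rw [hcntdef]
  exact funext_iff.symm

lemma aux_bridge {n : ℕ} (q : ℕ → Prop) [DecidablePred q] :
    ((Finset.univ : Finset (Fin n)).filter fun i => q i.val).card
      = ((Finset.range n).filter q).card := by
  refine Finset.card_bij (fun (i : Fin n) _ => (i : ℕ)) ?_ ?_ ?_
  · intro a ha
    rw [Finset.mem_filter] at ha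
    rw [Finset.mem_filter, Finset.mem_range]
    exact ⟨a.2, ha.2⟩
  · intro a _ b _ h; exact Fin.val_injective h
  · intro b hb
    simp only [Finset.mem_filter, Finset.mem_range] at hb
    exact ⟨⟨b, hb.1⟩, by simp [hb.2], rfl⟩

/-- For a Pólya sequence `{Y_j}` with parameter measure `α` of total mass
`a > 0` (characterized by its initial distribution `α/a` and its predictive distributions),
and any measurable partition `B_1, …, B_k` of `𝕏`, the probability that exactly `j_ℓ` of
`Y_0, …, Y_{n-1}` fall in `B_ℓ` for each `ℓ` equals
`(n choose j_1 … j_k) ∏_ℓ (α(B_ℓ))_{j_ℓ↑} / (a)_{n↑}` (rising factorials). -/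
theorem polya_partition_counts
    {X : Type*} [MeasurableSpace X]
    {Ω : Type*} [MeasurableSpace Ω] {μpr : Measure Ω} [IsProbabilityMeasure μpr]
    (α : Measure X) [IsFiniteMeasure α] (ha : 0 < (α Set.univ).toReal)
    (Y : ℕ → Ω → X) (hYmeas : ∀ j, Measurable (Y j))
    (hY0 : Measure.map (Y 0) μpr = (α Set.univ)⁻¹ • α)
    (hpred : ∀ (j : ℕ) (A : Set X), MeasurableSet A →
      (μpr[fun ω => Set.indicator A (fun _ => (1 : ℝ)) (Y (j + 1) ω) |
          MeasurableSpace.comap (fun ω (i : Fin (j + 1)) => Y (i : ℕ) ω) MeasurableSpace.pi])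
        =ᵐ[μpr] fun ω =>
          ((α A).toReal + ∑ i ∈ Finset.range (j + 1),
              Set.indicator A (fun _ => (1 : ℝ)) (Y i ω)) / ((α Set.univ).toReal + (j + 1)))
    (n k : ℕ) (B : Fin k → Set X) (hB : ∀ ℓ, MeasurableSet (B ℓ))
    (hdisj : Pairwise (Function.onFun Disjoint B)) (hcov : (⋃ ℓ, B ℓ) = Set.univ)
    (j : Fin k → ℕ) (hj : ∑ ℓ, j ℓ = n) :
    μpr {ω | ∀ ℓ : Fin k,
        ((Finset.range n).filter fun i => Y i ω ∈ B ℓ).card = j ℓ}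
      = ENNReal.ofReal ((Nat.multinomial Finset.univ j : ℝ) *
          (∏ ℓ, (ascPochhammer ℝ (j ℓ)).eval (α (B ℓ)).toReal) /
            (ascPochhammer ℝ n).eval (α Set.univ).toReal) := by
  -- the key product formula for "cylinder" events
  have key : ∀ (m : ℕ) (c : ℕ → Fin k),
      (μpr {ω | ∀ i ∈ Finset.range m, Y i ω ∈ B (c i)}).toReal
        = ∏ i ∈ Finset.range m,
            (((α (B (c i))).toReal
                + (((Finset.range i).filter fun i' => c i' = c i).card : ℝ))
              / ((α Set.univ).toReal + i)) := by
    intro m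
    induction m with
    | zero =>
      intro c
      simp
    | succ m ih =>
      intro c
      have hsplit : {ω | ∀ i ∈ Finset.range (m + 1), Y i ω ∈ B (c i)}
          = {ω | ∀ i ∈ Finset.range m, Y i ω ∈ B (c i)} ∩ (Y m ⁻¹' B (c m)) := by
        ext ω
        simp only [Set.mem_setOf_eq, Set.mem_inter_iff, Set.mem_preimage, Finset.mem_range]
        constructor
        · intro h
          exact ⟨fun i hi => h i (hi.trans (Nat.lt_succ_self m)), h m (Nat.lt_succ_self m)⟩
        · rintro ⟨h1, h2⟩ i hi
          rcases Nat.lt_succ_iff_lt_or_eq.mp hi with h | h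
          · exact h1 i h
          · subst h; exact h2
      cases m with
      | zero =>
        have hset : {ω | ∀ i ∈ Finset.range 1, Y i ω ∈ B (c i)} = Y 0 ⁻¹' B (c 0) := by
          ext ω
          simp [Finset.mem_range, Nat.lt_one_iff]
        have hmap := Measure.map_apply (μ := μpr) (hYmeas 0) (hB (c 0))
        rw [hY0] at hmap
        rw [hset, ← hmap]
        rw [Finset.prod_range_one]
        simp only [Measure.smul_apply, smul_eq_mul, ENNReal.toReal_mul, ENNReal.toReal_inv,
          Finset.range_zero, Finset.filter_empty, Finset.card_empty, Nat.cast_zero, add_zero,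
          CharP.cast_eq_zero]
        rw [div_eq_inv_mul]
      | succ m' =>
        -- use the predictive distribution at step m' (predicting Y (m'+1))
        set Eprev : Set Ω := {ω | ∀ i ∈ Finset.range (m' + 1), Y i ω ∈ B (c i)} with hEprev
        have hm_le : MeasurableSpace.comap
              (fun ω (i : Fin (m' + 1)) => Y (i : ℕ) ω) MeasurableSpace.pi
            ≤ (inferInstance : MeasurableSpace Ω) :=
          Measurable.comap_le (measurable_pi_iff.mpr fun i => hYmeas i)
        have hEm0 : MeasurableSet[MeasurableSpace.comap
              (fun ω (i : Fin (m' + 1)) => Y (i : ℕ) ω) MeasurableSpace.pi] Eprev := by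
          refine ⟨Set.univ.pi (fun i : Fin (m' + 1) => B (c i)),
            MeasurableSet.univ_pi (fun i => hB _), ?_⟩
          ext ω
          simp only [Set.mem_preimage, Set.mem_pi, Set.mem_univ, forall_true_left, hEprev,
            Set.mem_setOf_eq, Finset.mem_range]
          constructor
          · intro h i hi; exact h ⟨i, hi⟩
          · intro h i; exact h i i.2
        have hEmeas : MeasurableSet Eprev := hm_le _ hEm0
        have hfeq : (fun ω => Set.indicator (B (c (m' + 1))) (fun _ => (1 : ℝ)) (Y (m' + 1) ω))
            = fun ω => (Y (m' + 1) ⁻¹' B (c (m' + 1))).indicator (fun _ => (1 : ℝ)) ω := by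
          funext ω
          exact (Set.indicator_comp_right (Y (m' + 1))
            (s := B (c (m' + 1))) (g := fun _ => (1 : ℝ))).symm
        have hfint : Integrable
            (fun ω => Set.indicator (B (c (m' + 1))) (fun _ => (1 : ℝ)) (Y (m' + 1) ω)) μpr := by
          rw [hfeq]
          rw [integrable_indicator_iff ((hYmeas (m' + 1)) (hB (c (m' + 1))))]
          exact integrableOn_const (measure_lt_top _ _).ne
        have hSI := setIntegral_condExp hm_le hfint hEm0
        have hRHS : ∫ ω in Eprev,
              Set.indicator (B (c (m' + 1))) (fun _ => (1 : ℝ)) (Y (m' + 1) ω) ∂μpr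
            = (μpr (Eprev ∩ Y (m' + 1) ⁻¹' B (c (m' + 1)))).toReal := by
          rw [hfeq, setIntegral_indicator ((hYmeas (m' + 1)) (hB (c (m' + 1)))),
            setIntegral_const, smul_eq_mul, mul_one]
          rfl
        set C : ℝ := ((α (B (c (m' + 1)))).toReal
            + (((Finset.range (m' + 1)).filter fun i' => c i' = c (m' + 1)).card : ℝ))
          / ((α Set.univ).toReal + (m' + 1)) with hC
        have hEqOn : Set.EqOn
            (fun ω => ((α (B (c (m' + 1)))).toReal + ∑ i ∈ Finset.range (m' + 1),
                Set.indicator (B (c (m' + 1))) (fun _ => (1 : ℝ)) (Y i ω))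
              / ((α Set.univ).toReal + ((m' : ℝ) + 1)))
            (fun _ => C) Eprev := by
          intro ω hω
          have hω' : ∀ i ∈ Finset.range (m' + 1), Y i ω ∈ B (c i) := hω
          have hsum : ∑ i ∈ Finset.range (m' + 1),
              Set.indicator (B (c (m' + 1))) (fun _ => (1 : ℝ)) (Y i ω)
              = (((Finset.range (m' + 1)).filter fun i' => c i' = c (m' + 1)).card : ℝ) := by
            have hterm : ∀ i ∈ Finset.range (m' + 1),
                Set.indicator (B (c (m' + 1))) (fun _ => (1 : ℝ)) (Y i ω)
                  = if c i = c (m' + 1) then (1 : ℝ) else 0 := by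
              intro i hi
              by_cases h : c i = c (m' + 1)
              · rw [Set.indicator_of_mem (h ▸ hω' i hi), if_pos h]
              · rw [Set.indicator_of_notMem
                  (Set.disjoint_left.mp (hdisj h) (hω' i hi)), if_neg h]
            rw [Finset.sum_congr rfl hterm, Finset.sum_boole]
          simp only [hsum, hC]
        have hLHS : ∫ ω in Eprev,
              (μpr[fun ω => Set.indicator (B (c (m' + 1))) (fun _ => (1 : ℝ)) (Y (m' + 1) ω) |
                MeasurableSpace.comap (fun ω (i : Fin (m' + 1)) => Y (i : ℕ) ω)
                  MeasurableSpace.pi]) ω ∂μpr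
            = C * (μpr Eprev).toReal := by
          rw [setIntegral_congr_ae hEmeas
            ((hpred m' (B (c (m' + 1))) (hB (c (m' + 1)))).mono fun ω h _ => h)]
          rw [setIntegral_congr_fun hEmeas hEqOn, setIntegral_const, smul_eq_mul, mul_comm]
          rfl
        have hmain : (μpr (Eprev ∩ Y (m' + 1) ⁻¹' B (c (m' + 1)))).toReal
            = C * (μpr Eprev).toReal := by
          rw [← hRHS, ← hSI, hLHS]
        rw [hsplit, hmain, ih c, Finset.prod_range_succ (n := m' + 1), hC]
        push_cast
        ring
  -- basic consequences of the hypotheses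
  have hane : α Set.univ ≠ 0 := by
    intro h; rw [h] at ha; simp at ha
  have hXne : Nonempty X := by
    by_contra h
    rw [not_nonempty_iff] at h
    exact hane (by rw [Set.univ_eq_empty_iff.mpr h]; exact measure_empty)
  have hkpos : 0 < k := by
    obtain ⟨x⟩ := hXne
    have hx : x ∈ ⋃ ℓ, B ℓ := by rw [hcov]; trivial
    obtain ⟨ℓ, -⟩ := Set.mem_iUnion.mp hx
    exact ℓ.pos
  have hcell : ∀ x : X, ∃ ℓ, x ∈ B ℓ := fun x => Set.mem_iUnion.mp (by rw [hcov]; trivial)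
  set cell : X → Fin k := fun x => (hcell x).choose with hcelldef
  have hcellmem : ∀ x, x ∈ B (cell x) := fun x => (hcell x).choose_spec
  have hcell_eq : ∀ x ℓ, x ∈ B ℓ → cell x = ℓ := by
    intro x ℓ hx
    by_contra h
    exact Set.disjoint_left.mp (hdisj h) (hcellmem x) hx
  set cext : (Fin n → Fin k) → ℕ → Fin k :=
    fun c i => if h : i < n then c ⟨i, h⟩ else ⟨0, hkpos⟩ with hcext
  set E : (Fin n → Fin k) → Set Ω :=
    fun c => {ω | ∀ i ∈ Finset.range n, Y i ω ∈ B (cext c i)} with hE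
  set T : Finset (Fin n → Fin k) :=
    Finset.univ.filter (fun c => ∀ ℓ, (Finset.univ.filter fun i => c i = ℓ).card = j ℓ)
    with hT
  have hEc : ∀ c, E c = {ω | ∀ i ∈ Finset.range n, Y i ω ∈ B (cext c i)} := fun c => rfl
  have hTmem : ∀ c, c ∈ T ↔ ∀ ℓ, (Finset.univ.filter fun i => c i = ℓ).card = j ℓ := by
    intro c
    rw [hT, Finset.mem_filter]
    exact and_iff_right (Finset.mem_univ _)
  have hext : ∀ (c : Fin n → Fin k) (i : Fin n), cext c i.val = c i := by
    intro c i
    rw [hcext]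
    simp only [i.2, dif_pos]
  have hEmeas : ∀ c, MeasurableSet (E c) := by
    intro c
    have h1 : E c = ⋂ i ∈ Finset.range n, Y i ⁻¹' B (cext c i) := by
      rw [hEc]; ext ω; simp [Set.mem_iInter]
    rw [h1]
    exact MeasurableSet.biInter (Finset.range n).countable_toSet
      (fun i _ => (hYmeas i) (hB _))
  have hSU : {ω | ∀ ℓ : Fin k, ((Finset.range n).filter fun i => Y i ω ∈ B ℓ).card = j ℓ}
      = ⋃ c ∈ T, E c := by
    ext ω
    simp only [Set.mem_setOf_eq, Set.mem_iUnion]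
    constructor
    · intro hω
      refine ⟨fun i => cell (Y i.val ω), ?_, ?_⟩
      · rw [hTmem]
        intro ℓ
        have hiff : ∀ i : Fin n, (cell (Y i.val ω) = ℓ) ↔ (Y i.val ω ∈ B ℓ) := fun i =>
          ⟨fun h => h ▸ hcellmem _, fun h => hcell_eq _ _ h⟩
        rw [Finset.filter_congr (fun i _ => hiff i), aux_bridge (fun i => Y i ω ∈ B ℓ)]
        exact hω ℓ
      · intro i hi
        have hi' := Finset.mem_range.mp hi
        have : cext (fun i0 => cell (Y i0.val ω)) i = cell (Y i ω) := by
          rw [hcext]; simp only [hi', dif_pos]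
        rw [this]
        exact hcellmem _
    · rintro ⟨c, hcT, hcE⟩ ℓ
      rw [hTmem] at hcT
      have hcE' : ∀ i ∈ Finset.range n, Y i ω ∈ B (cext c i) := hcE
      have hfilter : (Finset.range n).filter (fun i => Y i ω ∈ B ℓ)
          = (Finset.range n).filter (fun i => cext c i = ℓ) := by
        refine Finset.filter_congr fun i hi => ?_
        have hYi := hcE' i hi
        constructor
        · intro h
          by_contra hne
          exact Set.disjoint_left.mp (hdisj hne) hYi h
        · intro h; exact h ▸ hYi
      rw [hfilter, ← aux_bridge (fun i => cext c i = ℓ),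
        Finset.filter_congr (fun (i : Fin n) (_ : i ∈ Finset.univ) => by rw [hext c i])]
      exact hcT ℓ
  have hdisjE : (↑T : Set (Fin n → Fin k)).PairwiseDisjoint E := by
    intro c1 _ c2 _ hne
    refine Set.disjoint_left.mpr fun ω h1 h2 => hne (funext fun i => ?_)
    have e1 : Y i.val ω ∈ B (cext c1 i.val) := h1 i.val (Finset.mem_range.mpr i.2)
    have e2 : Y i.val ω ∈ B (cext c2 i.val) := h2 i.val (Finset.mem_range.mpr i.2)
    rw [hext c1 i] at e1
    rw [hext c2 i] at e2
    by_contra hne'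
    exact Set.disjoint_left.mp (hdisj hne') e1 e2
  have hsum : μpr {ω | ∀ ℓ : Fin k,
        ((Finset.range n).filter fun i => Y i ω ∈ B ℓ).card = j ℓ}
      = ∑ c ∈ T, μpr (E c) := by
    rw [hSU]
    exact measure_biUnion_finset hdisjE (fun c _ => hEmeas c)
  set M : ℝ := (∏ ℓ, (ascPochhammer ℝ (j ℓ)).eval (α (B ℓ)).toReal)
      / (ascPochhammer ℝ n).eval (α Set.univ).toReal with hM
  have hden : ∏ i ∈ Finset.range n, ((α Set.univ).toReal + (i : ℝ))
      = (ascPochhammer ℝ n).eval (α Set.univ).toReal := by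
    have h := aux_poch (Finset.range n) ((α Set.univ).toReal)
    rw [Finset.card_range] at h
    rw [← h]
    refine Finset.prod_congr rfl fun i hi => ?_
    have h2 : (Finset.range n).filter (· < i) = Finset.range i := by
      ext x
      simp only [Finset.mem_filter, Finset.mem_range]
      exact ⟨fun h => h.2, fun h => ⟨h.trans (Finset.mem_range.mp hi), h⟩⟩
    rw [h2, Finset.card_range]
  have hterm : ∀ c ∈ T, (μpr (E c)).toReal = M := by
    intro c hcT
    rw [hTmem] at hcT
    rw [hEc, key n (cext c), Finset.prod_div_distrib, hden, hM]
    congr 1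
    rw [aux_regroup (cext c) (fun ℓ => (α (B ℓ)).toReal) n]
    refine Finset.prod_congr rfl fun ℓ _ => ?_
    have hcard : ((Finset.range n).filter fun i => cext c i = ℓ).card = j ℓ := by
      rw [← aux_bridge (fun i => cext c i = ℓ),
        Finset.filter_congr (fun (i : Fin n) (_ : i ∈ Finset.univ) => by rw [hext c i])]
      exact hcT ℓ
    rw [hcard]
  have hfin : ∀ c ∈ T, μpr (E c) = ENNReal.ofReal M := by
    intro c hcT
    rw [← ENNReal.ofReal_toReal (measure_ne_top μpr (E c)), hterm c hcT]
  have hcardT : T.card = Nat.multinomial Finset.univ j := by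
    rw [hT]
    exact aux_card j hj
  rw [hsum, Finset.sum_congr rfl hfin, Finset.sum_const, nsmul_eq_mul, hcardT,
    ← ENNReal.ofReal_natCast (Nat.multinomial Finset.univ j),
    ← ENNReal.ofReal_mul (Nat.cast_nonneg _), hM, mul_div_assoc]
end

section
/- With C_n^{(s_1,s_2)} := ∑_{j_1+j_2=n} (n choose j_1) (α_1)_{j_1↑}(α_2)_{j_2↑}/(a)_{n↑} · (j_1)_{s_1↓}(j_2)_{s_2↓} as above, the recursion C_{n+1}^{(s_1,s_2)} = ((n+1)(α_1+s_1-1)/(a+n)) C_n^{(s_1-1,s_2)} + ((n+1)/(a+n)) C_n^{(s_1,s_2)} holds for all integers s_1 ≥ 1, s_2 ≥ 0 and n ≥ 0. -/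
open Finset Polynomial

/-- The joint factorial-moment quantity
`C_n^{(s₁,s₂)} = ∑_{j₁+j₂=n} (n choose j₁) (α₁)_{j₁↑}(α₂)_{j₂↑}/(a)_{n↑} (j₁)_{s₁↓}(j₂)_{s₂↓}`
of the bivariate Pólya (Beta-binomial) distribution. -/
noncomputable def polyaC (α₁ α₂ : ℝ) (n s₁ s₂ : ℕ) : ℝ :=
  ∑ j ∈ Finset.range (n + 1),
    (n.choose j : ℝ) *
      ((ascPochhammer ℝ j).eval α₁ * (ascPochhammer ℝ (n - j)).eval α₂ /
        (ascPochhammer ℝ n).eval (α₁ + α₂)) *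
      ((descPochhammer ℝ s₁).eval (j : ℝ) * (descPochhammer ℝ s₂).eval ((n - j : ℕ) : ℝ))


private lemma asc_add_eval (x : ℝ) (p q : ℕ) :
    (ascPochhammer ℝ (p + q)).eval x
      = (ascPochhammer ℝ p).eval x * (ascPochhammer ℝ q).eval (x + p) := by
  rw [← ascPochhammer_mul, Polynomial.eval_mul, Polynomial.eval_comp]
  simp

private lemma desc_succ_left_eval (m : ℕ) (x : ℝ) :
    (descPochhammer ℝ (m + 1)).eval x = x * (descPochhammer ℝ m).eval (x - 1) := by
  rw [descPochhammer_succ_left, Polynomial.eval_mul, Polynomial.eval_comp]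
  simp

private lemma asc_vandermonde (m : ℕ) (x y : ℝ) :
    ∑ i ∈ range (m + 1), (m.choose i : ℝ) * (ascPochhammer ℝ i).eval x *
        (ascPochhammer ℝ (m - i)).eval y
      = (ascPochhammer ℝ m).eval (x + y) := by
  induction m with
  | zero => simp
  | succ m ih =>
    have hB0 : ∑ j ∈ range (m + 1 + 1), (m.choose j : ℝ) * (ascPochhammer ℝ j).eval x *
          (ascPochhammer ℝ (m + 1 - j)).eval y
        = ∑ j ∈ range (m + 1), (m.choose j : ℝ) * (ascPochhammer ℝ j).eval x *
            (ascPochhammer ℝ (m - j)).eval y * (y + ((m : ℝ) - j)) := by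
      rw [Finset.sum_range_succ]
      simp only [Nat.choose_succ_self, Nat.cast_zero, zero_mul, add_zero]
      refine Finset.sum_congr rfl fun j hj => ?_
      have hj' : j ≤ m := Nat.lt_succ_iff.mp (Finset.mem_range.mp hj)
      have h1 : m + 1 - j = (m - j) + 1 := by omega
      rw [h1, ascPochhammer_succ_eval, Nat.cast_sub hj']
      ring
    have hB : ∑ j ∈ range (m + 1 + 1), (m.choose j : ℝ) * (ascPochhammer ℝ j).eval x *
          (ascPochhammer ℝ (m + 1 - j)).eval y
        = (∑ i ∈ range (m + 1), (m.choose (i + 1) : ℝ) * (ascPochhammer ℝ (i + 1)).eval x *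
            (ascPochhammer ℝ (m - i)).eval y)
          + (ascPochhammer ℝ (m + 1)).eval y := by
      rw [Finset.sum_range_succ']
      simp [Nat.succ_sub_succ]
    rw [Finset.sum_range_succ']
    have hstep : ∀ i ∈ range (m + 1),
        ((m + 1).choose (i + 1) : ℝ) * (ascPochhammer ℝ (i + 1)).eval x *
            (ascPochhammer ℝ (m + 1 - (i + 1))).eval y
          = (m.choose i : ℝ) * (ascPochhammer ℝ i).eval x * (x + i) *
              (ascPochhammer ℝ (m - i)).eval y
            + (m.choose (i + 1) : ℝ) * (ascPochhammer ℝ (i + 1)).eval x *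
                (ascPochhammer ℝ (m - i)).eval y := by
      intro i hi
      have h1 : m + 1 - (i + 1) = m - i := by omega
      rw [h1, Nat.choose_succ_succ, Nat.cast_add, ascPochhammer_succ_eval]
      ring
    rw [Finset.sum_congr rfl hstep, Finset.sum_add_distrib, add_assoc]
    have hcomb : (∑ i ∈ range (m + 1), (m.choose (i + 1) : ℝ) *
            (ascPochhammer ℝ (i + 1)).eval x * (ascPochhammer ℝ (m - i)).eval y)
          + ((m + 1).choose 0 : ℝ) * (ascPochhammer ℝ 0).eval x *
              (ascPochhammer ℝ (m + 1 - 0)).eval y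
        = ∑ j ∈ range (m + 1), (m.choose j : ℝ) * (ascPochhammer ℝ j).eval x *
            (ascPochhammer ℝ (m - j)).eval y * (y + ((m : ℝ) - j)) := by
      rw [← hB0, hB]; simp
    rw [hcomb, ← Finset.sum_add_distrib, ascPochhammer_succ_eval, ← ih, Finset.sum_mul]
    refine Finset.sum_congr rfl fun i hi => ?_
    ring

private lemma nat_key (s₁ s₂ i k : ℕ) :
    (s₁ + i + (s₂ + k)).choose (s₁ + i) * (s₁ + i).descFactorial s₁ *
        (s₂ + k).descFactorial s₂
      = (s₁ + i + (s₂ + k)).descFactorial (s₁ + s₂) * (i + k).choose i := by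
  refine Nat.eq_of_mul_eq_mul_right (Nat.mul_pos i.factorial_pos k.factorial_pos) ?_
  have h1 : i.factorial * (s₁ + i).descFactorial s₁ = (s₁ + i).factorial := by
    have := Nat.factorial_mul_descFactorial (Nat.le_add_right s₁ i)
    rwa [show s₁ + i - s₁ = i by omega] at this
  have h2 : k.factorial * (s₂ + k).descFactorial s₂ = (s₂ + k).factorial := by
    have := Nat.factorial_mul_descFactorial (Nat.le_add_right s₂ k)
    rwa [show s₂ + k - s₂ = k by omega] at this
  have h3 : (s₁ + i + (s₂ + k)).choose (s₁ + i) * (s₁ + i).factorial * (s₂ + k).factorial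
      = (s₁ + i + (s₂ + k)).factorial := by
    have := Nat.choose_mul_factorial_mul_factorial (Nat.le_add_right (s₁ + i) (s₂ + k))
    rwa [show s₁ + i + (s₂ + k) - (s₁ + i) = s₂ + k by omega] at this
  have h4 : (i + k).choose i * i.factorial * k.factorial = (i + k).factorial := by
    have := Nat.choose_mul_factorial_mul_factorial (Nat.le_add_right i k)
    rwa [show i + k - i = k by omega] at this
  have h5 : (i + k).factorial * (s₁ + i + (s₂ + k)).descFactorial (s₁ + s₂)
      = (s₁ + i + (s₂ + k)).factorial := by
    have := Nat.factorial_mul_descFactorial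
      (show s₁ + s₂ ≤ s₁ + i + (s₂ + k) by omega)
    rwa [show s₁ + i + (s₂ + k) - (s₁ + s₂) = i + k by omega] at this
  calc (s₁ + i + (s₂ + k)).choose (s₁ + i) * (s₁ + i).descFactorial s₁ *
        (s₂ + k).descFactorial s₂ * (i.factorial * k.factorial)
      = (s₁ + i + (s₂ + k)).choose (s₁ + i) *
          ((i.factorial * (s₁ + i).descFactorial s₁) *
            (k.factorial * (s₂ + k).descFactorial s₂)) := by ring
    _ = (s₁ + i + (s₂ + k)).choose (s₁ + i) * (s₁ + i).factorial * (s₂ + k).factorial := by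
        rw [h1, h2]; ring
    _ = (s₁ + i + (s₂ + k)).factorial := h3
    _ = (i + k).factorial * (s₁ + i + (s₂ + k)).descFactorial (s₁ + s₂) := h5.symm
    _ = (s₁ + i + (s₂ + k)).descFactorial (s₁ + s₂) * ((i + k).choose i * i.factorial *
          k.factorial) := by rw [h4]; ring
    _ = (s₁ + i + (s₂ + k)).descFactorial (s₁ + s₂) * (i + k).choose i *
          (i.factorial * k.factorial) := by ring

private lemma polyaC_closed (α₁ α₂ : ℝ) (h₁ : 0 < α₁) (h₂ : 0 < α₂) (n s₁ s₂ : ℕ) :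
    polyaC α₁ α₂ n s₁ s₂
      = (descPochhammer ℝ (s₁ + s₂)).eval (n : ℝ) *
          ((ascPochhammer ℝ s₁).eval α₁ * (ascPochhammer ℝ s₂).eval α₂ /
            (ascPochhammer ℝ (s₁ + s₂)).eval (α₁ + α₂)) := by
  have ha : (0:ℝ) < α₁ + α₂ := by linarith
  by_cases hns : n < s₁ + s₂
  · have hR : (descPochhammer ℝ (s₁ + s₂)).eval (n : ℝ) = 0 := by
      rw [descPochhammer_eval_eq_descFactorial,
        Nat.descFactorial_eq_zero_iff_lt.mpr hns, Nat.cast_zero]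
    rw [hR, zero_mul]
    refine Finset.sum_eq_zero fun j hj => ?_
    have hj' : j ≤ n := Nat.lt_succ_iff.mp (Finset.mem_range.mp hj)
    by_cases hj1 : j < s₁
    · rw [descPochhammer_eval_eq_descFactorial,
        Nat.descFactorial_eq_zero_iff_lt.mpr hj1, Nat.cast_zero]; ring
    · have h2' : n - j < s₂ := by omega
      rw [descPochhammer_eval_eq_descFactorial (R := ℝ) (n - j) s₂,
        Nat.descFactorial_eq_zero_iff_lt.mpr h2', Nat.cast_zero]; ring
  · push_neg at hns
    have hsub : Finset.Ico s₁ (n - s₂ + 1) ⊆ Finset.range (n + 1) := by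
      intro j hj; simp only [Finset.mem_Ico, Finset.mem_range] at *; omega
    have hzero : ∀ j ∈ Finset.range (n + 1), j ∉ Finset.Ico s₁ (n - s₂ + 1) →
        (n.choose j : ℝ) *
          ((ascPochhammer ℝ j).eval α₁ * (ascPochhammer ℝ (n - j)).eval α₂ /
            (ascPochhammer ℝ n).eval (α₁ + α₂)) *
          ((descPochhammer ℝ s₁).eval (j : ℝ) *
            (descPochhammer ℝ s₂).eval ((n - j : ℕ) : ℝ)) = 0 := by
      intro j hj hnot
      have hj' : j ≤ n := Nat.lt_succ_iff.mp (Finset.mem_range.mp hj)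
      simp only [Finset.mem_Ico, not_and, not_lt] at hnot
      by_cases hj1 : j < s₁
      · rw [descPochhammer_eval_eq_descFactorial,
          Nat.descFactorial_eq_zero_iff_lt.mpr hj1, Nat.cast_zero]; ring
      · have h2' : n - j < s₂ := by omega
        rw [descPochhammer_eval_eq_descFactorial (R := ℝ) (n - j) s₂,
          Nat.descFactorial_eq_zero_iff_lt.mpr h2', Nat.cast_zero]; ring
    unfold polyaC
    rw [← Finset.sum_subset hsub hzero, Finset.sum_Ico_eq_sum_range,
      show n - s₂ + 1 - s₁ = n - (s₁ + s₂) + 1 by omega]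
    have hterm : ∀ i ∈ Finset.range (n - (s₁ + s₂) + 1),
        (n.choose (s₁ + i) : ℝ) *
          ((ascPochhammer ℝ (s₁ + i)).eval α₁ *
            (ascPochhammer ℝ (n - (s₁ + i))).eval α₂ /
            (ascPochhammer ℝ n).eval (α₁ + α₂)) *
          ((descPochhammer ℝ s₁).eval ((s₁ + i : ℕ) : ℝ) *
            (descPochhammer ℝ s₂).eval ((n - (s₁ + i) : ℕ) : ℝ))
        = ((n.descFactorial (s₁ + s₂) : ℝ) * (ascPochhammer ℝ s₁).eval α₁ *
            (ascPochhammer ℝ s₂).eval α₂ / (ascPochhammer ℝ n).eval (α₁ + α₂)) *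
          (((n - (s₁ + s₂)).choose i : ℝ) * (ascPochhammer ℝ i).eval (α₁ + s₁) *
            (ascPochhammer ℝ (n - (s₁ + s₂) - i)).eval (α₂ + s₂)) := by
      intro i hi
      have hi' : i ≤ n - (s₁ + s₂) := Nat.lt_succ_iff.mp (Finset.mem_range.mp hi)
      set k := n - (s₁ + s₂) - i with hk
      have hn : n = s₁ + i + (s₂ + k) := by omega
      have e1 : n - (s₁ + i) = s₂ + k := by omega
      have e2 : n - (s₁ + s₂) = i + k := by omega
      rw [e1, e2, asc_add_eval α₁ s₁ i, asc_add_eval α₂ s₂ k,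
        descPochhammer_eval_eq_descFactorial (R := ℝ) (s₁ + i) s₁,
        descPochhammer_eval_eq_descFactorial (R := ℝ) (s₂ + k) s₂]
      have hkey := nat_key s₁ s₂ i k
      have hkey' : (n.choose (s₁ + i) : ℝ) * ((s₁ + i).descFactorial s₁ : ℝ) *
          ((s₂ + k).descFactorial s₂ : ℝ)
          = (n.descFactorial (s₁ + s₂) : ℝ) * ((i + k).choose i : ℝ) := by
        rw [hn]; exact_mod_cast congrArg (Nat.cast : ℕ → ℝ) hkey
      linear_combination ((ascPochhammer ℝ i).eval (α₁ + s₁) *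
        (ascPochhammer ℝ k).eval (α₂ + s₂) * (ascPochhammer ℝ s₁).eval α₁ *
        (ascPochhammer ℝ s₂).eval α₂ / (ascPochhammer ℝ n).eval (α₁ + α₂)) * hkey'
    rw [Finset.sum_congr rfl hterm, ← Finset.mul_sum, asc_vandermonde]
    have hx : α₁ + (s₁ : ℝ) + (α₂ + (s₂ : ℝ)) = α₁ + α₂ + (s₁ : ℝ) + (s₂ : ℝ) := by ring
    rw [hx]
    have hsplit : (ascPochhammer ℝ n).eval (α₁ + α₂)
        = (ascPochhammer ℝ (s₁ + s₂)).eval (α₁ + α₂) *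
            (ascPochhammer ℝ (n - (s₁ + s₂))).eval (α₁ + α₂ + (s₁ : ℝ) + (s₂ : ℝ)) := by
      have h := asc_add_eval (α₁ + α₂) (s₁ + s₂) (n - (s₁ + s₂))
      rw [show s₁ + s₂ + (n - (s₁ + s₂)) = n by omega, Nat.cast_add] at h
      rw [h]; ring_nf
    have hpos2 : (0:ℝ) < (ascPochhammer ℝ (n - (s₁ + s₂))).eval
        (α₁ + α₂ + (s₁ : ℝ) + (s₂ : ℝ)) :=
      ascPochhammer_pos _ _ (by positivity)
    have hpos1 : (0:ℝ) < (ascPochhammer ℝ (s₁ + s₂)).eval (α₁ + α₂) :=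
      ascPochhammer_pos _ _ ha
    rw [descPochhammer_eval_eq_descFactorial, hsplit]
    field_simp [hpos1.ne', hpos2.ne']

/-- The recursion
`C_{n+1}^{(s₁,s₂)} = ((n+1)(α₁+s₁-1)/(a+n)) C_n^{(s₁-1,s₂)} + ((n+1)/(a+n)) C_n^{(s₁,s₂)}`
holds for all integers `s₁ ≥ 1`, `s₂ ≥ 0` and `n ≥ 0`, where `a = α₁ + α₂`. -/
theorem polyaC_recursion (α₁ α₂ : ℝ) (h₁ : 0 < α₁) (h₂ : 0 < α₂)
    (n s₁ s₂ : ℕ) (hs₁ : 1 ≤ s₁) :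
    polyaC α₁ α₂ (n + 1) s₁ s₂
      = ((n + 1 : ℝ) * (α₁ + s₁ - 1) / (α₁ + α₂ + n)) * polyaC α₁ α₂ n (s₁ - 1) s₂
        + ((n + 1 : ℝ) / (α₁ + α₂ + n)) * polyaC α₁ α₂ n s₁ s₂ := by
  obtain ⟨t, rfl⟩ : ∃ t, s₁ = t + 1 := ⟨s₁ - 1, by omega⟩
  have ha : (0:ℝ) < α₁ + α₂ := by linarith
  have han : (0:ℝ) < α₁ + α₂ + n := by positivity
  have e : t + 1 + s₂ = (t + s₂) + 1 := by omega
  rw [polyaC_closed α₁ α₂ h₁ h₂, polyaC_closed α₁ α₂ h₁ h₂, polyaC_closed α₁ α₂ h₁ h₂,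
    show t + 1 - 1 = t from rfl, e]
  have hd1 : (descPochhammer ℝ ((t + s₂) + 1)).eval ((n + 1 : ℕ) : ℝ)
      = ((n : ℝ) + 1) * (descPochhammer ℝ (t + s₂)).eval (n : ℝ) := by
    rw [desc_succ_left_eval]; push_cast; ring_nf
  have hd2 : (descPochhammer ℝ ((t + s₂) + 1)).eval ((n : ℕ) : ℝ)
      = (descPochhammer ℝ (t + s₂)).eval (n : ℝ) * ((n : ℝ) - ((t + s₂ : ℕ) : ℝ)) :=
    descPochhammer_succ_eval _ _
  have hpos : (0:ℝ) < (ascPochhammer ℝ (t + s₂)).eval (α₁ + α₂) :=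
    ascPochhammer_pos _ _ ha
  have hpos2 : (0:ℝ) < α₁ + α₂ + ((t + s₂ : ℕ) : ℝ) := by positivity
  rw [hd1, hd2, ascPochhammer_succ_eval t α₁, ascPochhammer_succ_eval (t + s₂) (α₁ + α₂)]
  push_cast
  field_simp
  ring
end

section
/- Fix n ≥ 1, a > 0, and let E[|Y|] < ∞ where Y has distribution α_0. Consider the Markov chain M_m = θ_m ∑_{i=1}^n q_{m,i} Y_{m,i} + (1-θ_m) M_{m-1}, with θ_m ~ Beta(n,a), (q_{m,1},...,q_{m,n}) ~ Dirichlet(1,...,1), and (Y_{m,1},...,Y_{m,n}) from a Pólya sequence with parameter α = a·α_0, all independent across m and of each other. Then for V(x) = 1 + |x|, the one-step transition kernel p satisfies the drift inequality pV(x) ≤ 1 + (n/(n+a))E[|Y_{1,1}|] + (a/(n+a))|x| for all x ∈ ℝ; in particular, for any λ ∈ (a/(n+a), 1), pV(x) ≤ λ V(x) for all |x| > K^{(n)}(λ) := (1 - λ + (n/(n+a))E[|Y_{1,1}|])/(λ - a/(n+a)). -/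
open MeasureTheory ProbabilityTheory
open scoped ENNReal NNReal

/-- The Beta(a, b) distribution on ℝ, supported on (0,1). -/
noncomputable def betaMeasure (a b : ℝ) : Measure ℝ :=
  volume.withDensity fun x =>
    ENNReal.ofReal (Set.indicator (Set.Ioo 0 1)
      (fun y => Real.Gamma (a + b) / (Real.Gamma a * Real.Gamma b) *
        y ^ (a - 1) * (1 - y) ^ (b - 1)) x)

/-- The Dirichlet(1,…,1) distribution on the probability simplex of `Fin n → ℝ`. -/
noncomputable def dirichletOnes (n : ℕ) : Measure (Fin n → ℝ) :=
  Measure.map (fun (x : Fin (n - 1) → ℝ) (i : Fin n) =>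
      if h : (i : ℕ) < n - 1 then x ⟨i, h⟩ else 1 - ∑ j, x j)
    ((n - 1).factorial •
      volume.restrict {x : Fin (n - 1) → ℝ | (∀ i, 0 ≤ x i) ∧ ∑ i, x i ≤ 1})

lemma real_betaIntegral {u v : ℝ} (hu : 0 < u) (hv : 0 < v) :
    ∫ x in (0:ℝ)..1, x ^ (u - 1) * (1 - x) ^ (v - 1) =
      Real.Gamma u * Real.Gamma v / Real.Gamma (u + v) := by
  have key := Complex.Gamma_mul_Gamma_eq_betaIntegral (s := (u:ℂ)) (t := (v:ℂ))
    (by simpa using hu) (by simpa using hv)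
  have hB : Complex.betaIntegral u v =
      ((∫ x in (0:ℝ)..1, x ^ (u - 1) * (1 - x) ^ (v - 1) : ℝ) : ℂ) := by
    rw [Complex.betaIntegral, ← intervalIntegral.integral_ofReal]
    apply intervalIntegral.integral_congr
    intro x hx
    rw [Set.uIcc_of_le (by norm_num : (0:ℝ) ≤ 1)] at hx
    have h0 : (0:ℝ) ≤ x := hx.1
    have h1 : (0:ℝ) ≤ 1 - x := by linarith [hx.2]
    simp only []
    rw [Complex.ofReal_mul, Complex.ofReal_cpow h0, Complex.ofReal_cpow h1]
    push_cast
    ring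
  have hG : Real.Gamma (u + v) ≠ 0 := (Real.Gamma_pos_of_pos (by linarith)).ne'
  rw [hB] at key
  rw [← Complex.ofReal_add, Complex.Gamma_ofReal, Complex.Gamma_ofReal,
    Complex.Gamma_ofReal] at key
  field_simp
  rw [mul_comm]
  exact_mod_cast key.symm

lemma betaMeasure_integral_id {b a : ℝ} (hb : 0 < b) (ha : 0 < a) :
    ∫ x, x ∂ _root_.betaMeasure b a = b / (b + a) := by
  set C : ℝ := Real.Gamma (b + a) / (Real.Gamma b * Real.Gamma a) with hC
  set g : ℝ → ℝ := Set.indicator (Set.Ioo 0 1)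
      (fun y => C * y ^ (b - 1) * (1 - y) ^ (a - 1)) with hg
  have hgmeas : Measurable g := by
    apply Measurable.indicator _ measurableSet_Ioo
    fun_prop
  have hgnn : ∀ x, 0 ≤ g x := by
    intro x
    apply Set.indicator_nonneg
    intro y hy
    have hC0 : 0 ≤ C := le_of_lt (div_pos (Real.Gamma_pos_of_pos (by linarith))
      (mul_pos (Real.Gamma_pos_of_pos hb) (Real.Gamma_pos_of_pos ha)))
    have h1 := Real.rpow_nonneg (le_of_lt hy.1) (b - 1)
    have h2 := Real.rpow_nonneg (by linarith [hy.2] : (0:ℝ) ≤ 1 - y) (a - 1)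
    positivity
  have h1 : _root_.betaMeasure b a = volume.withDensity fun x => ((g x).toNNReal : ℝ≥0∞) := by
    rw [_root_.betaMeasure]; rfl
  rw [h1, integral_withDensity_eq_integral_smul hgmeas.real_toNNReal]
  have h2 : ∀ x : ℝ, (g x).toNNReal • x = g x * x := by
    intro x
    simp [NNReal.smul_def, Real.coe_toNNReal _ (hgnn x)]
  simp_rw [h2]
  have h3 : (fun x : ℝ => g x * x) =
      Set.indicator (Set.Ioo 0 1) (fun y => (C * y ^ (b - 1) * (1 - y) ^ (a - 1)) * y) := by
    funext x
    rw [hg]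
    by_cases hx : x ∈ Set.Ioo (0:ℝ) 1
    · simp [Set.indicator_of_mem hx]
    · simp [Set.indicator_of_notMem hx]
  rw [h3, integral_indicator measurableSet_Ioo, ← integral_Ioc_eq_integral_Ioo,
    ← intervalIntegral.integral_of_le (by norm_num : (0:ℝ) ≤ 1)]
  have h5 : ∫ x in (0:ℝ)..1, (C * x ^ (b - 1) * (1 - x) ^ (a - 1)) * x
      = ∫ x in (0:ℝ)..1, C * (x ^ ((b + 1) - 1) * (1 - x) ^ (a - 1)) := by
    apply intervalIntegral.integral_congr_ae
    filter_upwards with x hx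
    rw [Set.uIoc_of_le (by norm_num : (0:ℝ) ≤ 1)] at hx
    have hx0 : 0 < x := hx.1
    have : x ^ (b - 1) * x = x ^ b := by
      rw [← Real.rpow_add_one hx0.ne' (b - 1)]; norm_num
    have hb1 : (b + 1) - 1 = b := by ring
    rw [hb1]
    rw [← this]
    ring
  rw [h5, intervalIntegral.integral_const_mul, real_betaIntegral (by linarith) ha]
  have hGb : Real.Gamma b ≠ 0 := (Real.Gamma_pos_of_pos hb).ne'
  have hGa : Real.Gamma a ≠ 0 := (Real.Gamma_pos_of_pos ha).ne'
  have hGba : Real.Gamma (b + a) ≠ 0 := (Real.Gamma_pos_of_pos (by linarith)).ne'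
  have e1 : Real.Gamma (b + 1) = b * Real.Gamma b := Real.Gamma_add_one hb.ne'
  have e2 : Real.Gamma (b + 1 + a) = (b + a) * Real.Gamma (b + a) := by
    rw [show b + 1 + a = (b + a) + 1 by ring, Real.Gamma_add_one (by linarith)]
  have hGb1a : Real.Gamma (b + 1 + a) ≠ 0 := (Real.Gamma_pos_of_pos (by linarith)).ne'
  rw [hC, e1, e2]
  field_simp

lemma betaMeasure_compl (b a : ℝ) : _root_.betaMeasure b a (Set.Ioo 0 1)ᶜ = 0 := by
  rw [_root_.betaMeasure, withDensity_apply _ measurableSet_Ioo.compl]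
  rw [setLIntegral_congr_fun (g := fun _ => (0:ℝ≥0∞)) measurableSet_Ioo.compl
    (fun x hx => by
      rw [Set.indicator_of_notMem hx, ENNReal.ofReal_zero])]
  simp

lemma simplex_measurableSet (n : ℕ) :
    MeasurableSet {v : Fin n → ℝ | (∀ i, 0 ≤ v i) ∧ ∑ i, v i = 1} := by
  have h1 : {v : Fin n → ℝ | (∀ i, 0 ≤ v i) ∧ ∑ i, v i = 1} =
      (⋂ i, {v : Fin n → ℝ | 0 ≤ v i}) ∩ {v | ∑ i, v i = 1} := by
    ext v; simp [Set.mem_iInter]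
  rw [h1]
  exact MeasurableSet.inter
    (MeasurableSet.iInter fun i => measurableSet_le measurable_const (measurable_pi_apply i))
    (measurableSet_eq_fun (by fun_prop) measurable_const)

lemma dirichletOnes_simplex {n : ℕ} (hn : 1 ≤ n) :
    dirichletOnes n {v : Fin n → ℝ | (∀ i, 0 ≤ v i) ∧ ∑ i, v i = 1}ᶜ = 0 := by
  obtain ⟨m, rfl⟩ : ∃ m, n = m + 1 := ⟨n - 1, (Nat.succ_pred_eq_of_pos hn).symm⟩
  set g : (Fin (m + 1 - 1) → ℝ) → (Fin (m + 1) → ℝ) := fun x i =>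
    if h : (i : ℕ) < m + 1 - 1 then x ⟨i, h⟩ else 1 - ∑ j, x j with hgdef
  have hgmeas : Measurable g := by
    apply measurable_pi_lambda
    intro i
    by_cases h : (i : ℕ) < m + 1 - 1
    · simp only [hgdef, dif_pos h]
      exact measurable_pi_apply _
    · simp only [hgdef, dif_neg h]
      fun_prop
  rw [dirichletOnes, Measure.map_apply hgmeas (simplex_measurableSet (m + 1)).compl]
  rw [Measure.smul_apply, Measure.restrict_apply (hgmeas (simplex_measurableSet (m + 1)).compl)]
  have hempty : g ⁻¹' {v : Fin (m+1) → ℝ | (∀ i, 0 ≤ v i) ∧ ∑ i, v i = 1}ᶜ ∩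
      {x : Fin (m + 1 - 1) → ℝ | (∀ i, 0 ≤ x i) ∧ ∑ i, x i ≤ 1} = ∅ := by
    rw [Set.eq_empty_iff_forall_notMem]
    rintro x ⟨hx1, hx2⟩
    apply hx1
    constructor
    · intro i
      by_cases h : (i : ℕ) < m + 1 - 1
      · simp only [hgdef]
        rw [dif_pos h]
        exact hx2.1 _
      · simp only [hgdef]
        rw [dif_neg h]
        linarith [hx2.2]
    · show ∑ i : Fin (m+1), g x i = 1
      rw [Fin.sum_univ_castSucc]
      have h1 : ∀ i : Fin m, g x i.castSucc = x i := by
        intro i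
        have hi : ((i.castSucc : Fin (m+1)) : ℕ) < m + 1 - 1 := by simpa using i.isLt
        simp only [hgdef]
        rw [dif_pos hi]
        congr 1
      have h2 : ¬ (((Fin.last m) : Fin (m+1)) : ℕ) < m + 1 - 1 := by simp
      rw [Finset.sum_congr rfl fun i _ => h1 i]
      simp only [hgdef]
      rw [dif_neg h2]
      have : ∑ i : Fin m, x i = ∑ j : Fin (m + 1 - 1), x j := rfl
      rw [this]; ring
  rw [hempty, measure_empty, smul_zero]

/-- Foster–Lyapunov drift inequality for the generalized Feigin–Tweedie
mean chain. With `θ ~ Beta(n,a)`, `q ~ Dirichlet(1,…,1)`, `Y_i` marginally `α₀` with finite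
mean, all independent, the one-step expectation of `V(x) = 1 + |x|` along
`x ↦ θ ∑ q_i Y_i + (1-θ) x` is bounded by `1 + (n/(n+a)) E|Y| + (a/(n+a))|x|`; in particular
for `λ ∈ (a/(n+a), 1)` it is at most `λ V(x)` whenever `|x| > K^{(n)}(λ)`. -/
theorem drift_condition_mean_chain
    {Ω : Type*} [MeasurableSpace Ω] {μpr : Measure Ω} [IsProbabilityMeasure μpr]
    (n : ℕ) (hn : 1 ≤ n) (a : ℝ) (ha : 0 < a)
    (μ₀ : Measure ℝ) [IsProbabilityMeasure μ₀] (hμ₀ : Integrable (fun y => |y|) μ₀)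
    (θ : Ω → ℝ) (q : Fin n → Ω → ℝ) (Y : Fin n → Ω → ℝ)
    (hθmeas : Measurable θ) (hqmeas : ∀ i, Measurable (q i)) (hYmeas : ∀ i, Measurable (Y i))
    (hθ : Measure.map θ μpr = _root_.betaMeasure n a)
    (hq : Measure.map (fun ω (i : Fin n) => q i ω) μpr = dirichletOnes n)
    (hY : ∀ i, Measure.map (Y i) μpr = μ₀)
    (hYint : ∀ i, Integrable (Y i) μpr)
    (hind₁ : IndepFun θ (fun ω => ((fun i => q i ω), (fun i => Y i ω))) μpr)
    (hind₂ : IndepFun (fun ω (i : Fin n) => q i ω) (fun ω (i : Fin n) => Y i ω) μpr) :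
    (∀ x : ℝ, ∫ ω, (1 + |θ ω * ∑ i, q i ω * Y i ω + (1 - θ ω) * x|) ∂μpr
        ≤ 1 + ((n : ℝ) / (n + a)) * (∫ y, |y| ∂μ₀) + (a / (n + a)) * |x|) ∧
    ∀ l ∈ Set.Ioo (a / (n + a)) 1, ∀ x : ℝ,
      (1 - l + ((n : ℝ) / (n + a)) * ∫ y, |y| ∂μ₀) / (l - a / (n + a)) < |x| →
      ∫ ω, (1 + |θ ω * ∑ i, q i ω * Y i ω + (1 - θ ω) * x|) ∂μpr ≤ l * (1 + |x|) := by
  have hn0 : (0:ℝ) < n := by exact_mod_cast hn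
  have hna : (0:ℝ) < n + a := by linarith
  set I : ℝ := ∫ y, |y| ∂μ₀ with hI
  have hI0 : 0 ≤ I := integral_nonneg fun y => abs_nonneg y
  -- a.e. facts
  have hθae : ∀ᵐ ω ∂μpr, θ ω ∈ Set.Ioo (0:ℝ) 1 := by
    rw [ae_iff]
    have : {ω | ¬ θ ω ∈ Set.Ioo (0:ℝ) 1} = θ ⁻¹' (Set.Ioo (0:ℝ) 1)ᶜ := rfl
    rw [this, ← Measure.map_apply hθmeas measurableSet_Ioo.compl, hθ, betaMeasure_compl]
  have hq_ae : ∀ᵐ ω ∂μpr, (∀ i, 0 ≤ q i ω) ∧ ∑ i, q i ω = 1 := by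
    rw [ae_iff]
    have : {ω | ¬ ((∀ i, 0 ≤ q i ω) ∧ ∑ i, q i ω = 1)} =
        (fun ω (i : Fin n) => q i ω) ⁻¹'
          {v : Fin n → ℝ | (∀ i, 0 ≤ v i) ∧ ∑ i, v i = 1}ᶜ := rfl
    rw [this, ← Measure.map_apply (measurable_pi_lambda _ hqmeas)
      (simplex_measurableSet n).compl, hq, dirichletOnes_simplex hn]
  -- integrability
  have int_θ : Integrable θ μpr := by
    apply Integrable.mono' (integrable_const (1:ℝ)) hθmeas.aestronglyMeasurable
    filter_upwards [hθae] with ω h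
    rw [Real.norm_eq_abs, abs_of_pos h.1]
    exact h.2.le
  have int_qi : ∀ i, Integrable (q i) μpr := by
    intro i
    apply Integrable.mono' (integrable_const (1:ℝ)) (hqmeas i).aestronglyMeasurable
    filter_upwards [hq_ae] with ω h
    rw [Real.norm_eq_abs, abs_of_nonneg (h.1 i)]
    calc q i ω ≤ ∑ j, q j ω :=
          Finset.single_le_sum (fun j _ => h.1 j) (Finset.mem_univ i)
      _ = 1 := h.2
  have int_absY : ∀ i, Integrable (fun ω => |Y i ω|) μpr := fun i => (hYint i).abs
  have hqYi : ∀ i, IndepFun (q i) (fun ω => |Y i ω|) μpr := by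
    intro i
    exact hind₂.comp (measurable_pi_apply i) ((measurable_pi_apply i).abs)
  have int_qY : ∀ i, Integrable (fun ω => q i ω * |Y i ω|) μpr := fun i =>
    (hqYi i).integrable_mul (int_qi i) (int_absY i)
  have hSmeas : Measurable fun ω => |∑ i, q i ω * Y i ω| := by fun_prop
  have habs_le : ∀ᵐ ω ∂μpr, |∑ i, q i ω * Y i ω| ≤ ∑ i, q i ω * |Y i ω| := by
    filter_upwards [hq_ae] with ω h
    calc |∑ i, q i ω * Y i ω| ≤ ∑ i, |q i ω * Y i ω| := Finset.abs_sum_le_sum_abs _ _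
      _ = ∑ i, q i ω * |Y i ω| := by
          refine Finset.sum_congr rfl fun i _ => ?_
          rw [abs_mul, abs_of_nonneg (h.1 i)]
  have int_sum_qY : Integrable (fun ω => ∑ i, q i ω * |Y i ω|) μpr :=
    integrable_finset_sum _ fun i _ => int_qY i
  have int_S : Integrable (fun ω => |∑ i, q i ω * Y i ω|) μpr := by
    apply Integrable.mono' int_sum_qY hSmeas.aestronglyMeasurable
    filter_upwards [habs_le] with ω h
    rwa [Real.norm_eq_abs, abs_abs]
  have hθSindep : IndepFun θ (fun ω => |∑ i, q i ω * Y i ω|) μpr := by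
    have hψ : Measurable fun p : (Fin n → ℝ) × (Fin n → ℝ) => |∑ i, p.1 i * p.2 i| := by
      fun_prop
    exact hind₁.comp measurable_id hψ
  have int_θS : Integrable (fun ω => θ ω * |∑ i, q i ω * Y i ω|) μpr :=
    hθSindep.integrable_mul int_θ int_S
  -- key values
  have Eθval : ∫ ω, θ ω ∂μpr = (n:ℝ) / (n + a) := by
    have : ∫ ω, θ ω ∂μpr = ∫ x, x ∂(Measure.map θ μpr) :=
      (integral_map hθmeas.aemeasurable aestronglyMeasurable_id).symm
    rw [this, hθ, betaMeasure_integral_id hn0 ha]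
  have EabsYi : ∀ i, ∫ ω, |Y i ω| ∂μpr = I := by
    intro i
    rw [hI, ← hY i, integral_map (hYmeas i).aemeasurable measurable_abs.aestronglyMeasurable]
  have EθS : ∫ ω, θ ω * |∑ i, q i ω * Y i ω| ∂μpr =
      (∫ ω, θ ω ∂μpr) * ∫ ω, |∑ i, q i ω * Y i ω| ∂μpr :=
    hθSindep.integral_fun_mul_eq_mul_integral int_θ.1 int_S.1
  have EqYi : ∀ i, ∫ ω, q i ω * |Y i ω| ∂μpr = (∫ ω, q i ω ∂μpr) * I := by
    intro i
    rw [(hqYi i).integral_fun_mul_eq_mul_integral (int_qi i).1 (int_absY i).1, EabsYi i]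
  have Esum_q : ∑ i, ∫ ω, q i ω ∂μpr = 1 := by
    rw [← integral_finset_sum Finset.univ fun i _ => int_qi i]
    rw [integral_congr_ae (g := fun _ => (1:ℝ))
      (by filter_upwards [hq_ae] with ω h; exact h.2)]
    simp
  have ES_le : ∫ ω, |∑ i, q i ω * Y i ω| ∂μpr ≤ I := by
    calc ∫ ω, |∑ i, q i ω * Y i ω| ∂μpr ≤ ∫ ω, ∑ i, q i ω * |Y i ω| ∂μpr :=
          integral_mono_ae int_S int_sum_qY habs_le
      _ = ∑ i, ∫ ω, q i ω * |Y i ω| ∂μpr := integral_finset_sum _ fun i _ => int_qY i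
      _ = ∑ i, (∫ ω, q i ω ∂μpr) * I := Finset.sum_congr rfl fun i _ => EqYi i
      _ = (∑ i, ∫ ω, q i ω ∂μpr) * I := (Finset.sum_mul _ _ _).symm
      _ = I := by rw [Esum_q, one_mul]
  have ES_nonneg : 0 ≤ ∫ ω, |∑ i, q i ω * Y i ω| ∂μpr :=
    integral_nonneg fun ω => abs_nonneg _
  -- part 1
  have part1 : ∀ x : ℝ, ∫ ω, (1 + |θ ω * ∑ i, q i ω * Y i ω + (1 - θ ω) * x|) ∂μpr
      ≤ 1 + ((n : ℝ) / (n + a)) * I + (a / (n + a)) * |x| := by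
    intro x
    have hfmeas : Measurable fun ω => |θ ω * ∑ i, q i ω * Y i ω + (1 - θ ω) * x| := by
      fun_prop
    have hptwise : ∀ᵐ ω ∂μpr, |θ ω * ∑ i, q i ω * Y i ω + (1 - θ ω) * x|
        ≤ θ ω * |∑ i, q i ω * Y i ω| + (1 - θ ω) * |x| := by
      filter_upwards [hθae] with ω h
      calc |θ ω * ∑ i, q i ω * Y i ω + (1 - θ ω) * x|
          ≤ |θ ω * ∑ i, q i ω * Y i ω| + |(1 - θ ω) * x| := abs_add_le _ _
        _ = θ ω * |∑ i, q i ω * Y i ω| + (1 - θ ω) * |x| := by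
            rw [abs_mul, abs_mul, abs_of_pos h.1, abs_of_pos (by linarith [h.2] : 0 < 1 - θ ω)]
    have int_h : Integrable (fun ω => (1 - θ ω) * |x|) μpr := by
      exact ((integrable_const (1:ℝ)).sub int_θ).mul_const |x|
    have int_g : Integrable (fun ω => θ ω * |∑ i, q i ω * Y i ω| + (1 - θ ω) * |x|) μpr :=
      int_θS.add int_h
    have int_f : Integrable (fun ω => |θ ω * ∑ i, q i ω * Y i ω + (1 - θ ω) * x|) μpr := by
      apply Integrable.mono' int_g hfmeas.aestronglyMeasurable
      filter_upwards [hptwise, hθae] with ω h hθω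
      rw [Real.norm_eq_abs, abs_abs]
      exact h
    rw [integral_add (integrable_const 1) int_f, integral_const, probReal_univ]
    simp only [ENNReal.toReal_one, smul_eq_mul, mul_one, one_smul]
    have step2 : ∫ ω, |θ ω * ∑ i, q i ω * Y i ω + (1 - θ ω) * x| ∂μpr
        ≤ ∫ ω, (θ ω * |∑ i, q i ω * Y i ω| + (1 - θ ω) * |x|) ∂μpr :=
      integral_mono_ae int_f int_g hptwise
    have step3 : ∫ ω, (θ ω * |∑ i, q i ω * Y i ω| + (1 - θ ω) * |x|) ∂μpr
        = ((n:ℝ)/(n+a)) * (∫ ω, |∑ i, q i ω * Y i ω| ∂μpr) + (a/(n+a)) * |x| := by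
      have e1 : ∫ ω, (1 - θ ω) ∂μpr = a/(↑n+a) := by
        rw [integral_sub (integrable_const (1:ℝ)) int_θ, integral_const, probReal_univ, Eθval]
        simp only [ENNReal.toReal_one, one_smul, smul_eq_mul, mul_one]
        field_simp
        ring
      rw [integral_add int_θS int_h, EθS, Eθval, integral_mul_const, e1]
    have step4 : ((n:ℝ)/(n+a)) * (∫ ω, |∑ i, q i ω * Y i ω| ∂μpr) ≤ ((n:ℝ)/(n+a)) * I :=
      mul_le_mul_of_nonneg_left ES_le (by positivity)
    rw [step3] at step2
    linarith [step2, step4]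
  refine ⟨part1, ?_⟩
  rintro l ⟨hl1, hl2⟩ x hx
  have hden : 0 < l - a/(n+a) := sub_pos.mpr hl1
  have hx' : 1 - l + ((n:ℝ)/(n+a)) * I < (l - a/(n+a)) * |x| := by
    have := (div_lt_iff₀ hden).mp hx
    linarith
  have := part1 x
  nlinarith [this]
end
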